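/- Let 0 < λ < Λ and work in dimension n = 1, where for s ∈ ℝ the Pucci operators are M⁺(s) = Λs if s ≥ 0 and λs if s < 0, and M⁻(s) = λs if s ≥ 0 and Λs if s < 0. Define u(x) = (max(x,0))²/2 and v(x) = −(max(x,0))²/2 on [−1,1]. Then (u,v) solves the two membranes problem on the interval (−1,1) with F = M⁺, G = M⁻, f ≡ Λ, g ≡ −Λ in the viscosity sense: u ≥ v on [−1,1]; M⁺(u'') ≤ Λ and M⁻(v'') ≥ −Λ in (−1,1) in the viscosity sense; and M⁺(u'') = Λ and M⁻(v'') = −Λ in the viscosity sense in the set Ω = {u > v} = (0,1). -/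

import Mathlib

open Set

noncomputable section

/-- The one-dimensional Pucci maximal operator: `M⁺(s) = Λ s` if `s ≥ 0` and `λ s` if `s < 0`. -/
def MPlus1 (lam Lam s : ℝ) : ℝ := if 0 ≤ s then Lam * s else lam * s

/-- The one-dimensional Pucci minimal operator: `M⁻(s) = λ s` if `s ≥ 0` and `Λ s` if `s < 0`. -/
def MMinus1 (lam Lam s : ℝ) : ℝ := if 0 ≤ s then lam * s else Lam * s

/-- `F(u'') ≤ f` in `I` in the viscosity sense: whenever a `C²` function `φ` touches `u` from
below at `x₀ ∈ I`, then `F(φ''(x₀)) ≤ f(x₀)`. -/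
def ViscLE1 (F : ℝ → ℝ) (u f : ℝ → ℝ) (I : Set ℝ) : Prop :=
  ∀ φ : ℝ → ℝ, ContDiff ℝ 2 φ → ∀ x₀ ∈ I, (∀ x ∈ I, φ x ≤ u x) → φ x₀ = u x₀ →
    F (deriv (deriv φ) x₀) ≤ f x₀

/-- `F(u'') ≥ f` in `I` in the viscosity sense: whenever a `C²` function `φ` touches `u` from
above at `x₀ ∈ I`, then `F(φ''(x₀)) ≥ f(x₀)`. -/
def ViscGE1 (F : ℝ → ℝ) (u f : ℝ → ℝ) (I : Set ℝ) : Prop :=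
  ∀ φ : ℝ → ℝ, ContDiff ℝ 2 φ → ∀ x₀ ∈ I, (∀ x ∈ I, u x ≤ φ x) → φ x₀ = u x₀ →
    f x₀ ≤ F (deriv (deriv φ) x₀)

/-! ### Auxiliary lemmas -/

open Filter Topology

lemma TM.diff_deriv {f : ℝ → ℝ} (hf : ContDiff ℝ 2 f) : Differentiable ℝ (deriv f) := by
  rw [show (2 : WithTop ℕ∞) = 1 + 1 by norm_num] at hf
  exact (contDiff_succ_iff_deriv.mp hf).2.2.differentiable one_ne_zero

lemma TM.secondDeriv_nonneg_of_isLocalMin {h : ℝ → ℝ} (hC : ContDiff ℝ 2 h) {a : ℝ}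
    (hm : IsLocalMin h a) : 0 ≤ deriv (deriv h) a := by
  by_contra hneg
  push_neg at hneg
  set g := deriv h with hg
  have hdh : Differentiable ℝ h := hC.differentiable (by norm_num)
  have hgd : Differentiable ℝ g := TM.diff_deriv hC
  have hga : g a = 0 := hm.deriv_eq_zero
  have hslope := hasDerivAt_iff_tendsto_slope.mp (hgd a).hasDerivAt
  have h1 : ∀ᶠ x in 𝓝[≠] a, slope g a x < 0 := hslope.eventually (Iio_mem_nhds hneg)
  have hev : ∀ᶠ x in 𝓝[>] a, g x < 0 := by
    have h2 : ∀ᶠ x in 𝓝[>] a, slope g a x < 0 :=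
      h1.filter_mono (nhdsWithin_mono a fun x hx => ne_of_gt hx)
    filter_upwards [h2, self_mem_nhdsWithin] with x hx hxa
    rw [slope_def_field, hga, sub_zero] at hx
    have hpos : (0:ℝ) < x - a := sub_pos.mpr hxa
    rcases (div_neg_iff).mp hx with ⟨h3, h4⟩ | ⟨h3, h4⟩
    · linarith
    · exact h3
  have hev2 : ∀ᶠ x in 𝓝[>] a, g x < 0 ∧ h a ≤ h x :=
    hev.and (hm.filter_mono nhdsWithin_le_nhds)
  obtain ⟨b, hb, hsub⟩ := mem_nhdsGT_iff_exists_Ioc_subset.mp hev2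
  have hanti : StrictAntiOn h (Icc a b) :=
    strictAntiOn_of_deriv_neg (convex_Icc a b) hdh.continuous.continuousOn
      (fun x hx => by
        rw [interior_Icc] at hx
        exact (hsub ⟨hx.1, hx.2.le⟩).1)
  have h5 : h b < h a := hanti ⟨le_rfl, le_of_lt hb⟩ ⟨le_of_lt hb, le_rfl⟩ hb
  have h6 : h a ≤ h b := (hsub ⟨hb, le_rfl⟩).2
  linarith

lemma TM.touch_deriv2_le {φ ψ : ℝ → ℝ} (hφ : ContDiff ℝ 2 φ) (hψ : ContDiff ℝ 2 ψ) {S : Set ℝ}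
    (hS : IsOpen S) {x₀ : ℝ} (hx : x₀ ∈ S) (hle : ∀ x ∈ S, φ x ≤ ψ x) (heq : φ x₀ = ψ x₀) :
    deriv (deriv φ) x₀ ≤ deriv (deriv ψ) x₀ := by
  have h2 : ContDiff ℝ 2 (fun x => ψ x - φ x) := hψ.sub hφ
  have hmin : IsLocalMin (fun x => ψ x - φ x) x₀ := by
    filter_upwards [hS.mem_nhds hx] with x hx'
    have := hle x hx'
    linarith [heq.le, heq.ge]
  have key := TM.secondDeriv_nonneg_of_isLocalMin h2 hmin
  have hdψ : Differentiable ℝ ψ := hψ.differentiable (by norm_num)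
  have hdφ : Differentiable ℝ φ := hφ.differentiable (by norm_num)
  have e1 : deriv (fun x => ψ x - φ x) = fun x => deriv ψ x - deriv φ x := by
    funext x; exact deriv_sub (hdψ x) (hdφ x)
  rw [e1] at key
  rw [deriv_fun_sub (TM.diff_deriv hψ x₀) (TM.diff_deriv hφ x₀)] at key
  linarith

lemma TM.contDiff_q : ContDiff ℝ 2 (fun x : ℝ => x ^ 2 / 2) := (contDiff_id.pow 2).div_const 2

lemma TM.contDiff_negq : ContDiff ℝ 2 (fun x : ℝ => -(x ^ 2 / 2)) := TM.contDiff_q.neg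

lemma TM.deriv2_q (x : ℝ) : deriv (deriv (fun x : ℝ => x ^ 2 / 2)) x = 1 := by
  have h1 : deriv (fun x : ℝ => x ^ 2 / 2) = fun x => x := by
    funext y
    rw [deriv_div_const, deriv_pow_field]
    ring
  rw [h1, deriv_id'']

lemma TM.deriv2_negq (x : ℝ) : deriv (deriv (fun x : ℝ => -(x ^ 2 / 2))) x = -1 := by
  have h1 : deriv (fun x : ℝ => -(x ^ 2 / 2)) = fun x => -x := by
    funext y
    rw [deriv.fun_neg, deriv_div_const, deriv_pow_field]
    ring
  rw [h1]
  have h2 : deriv (fun x : ℝ => -x) x = -(deriv (fun x : ℝ => x) x) := deriv.fun_neg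
  rw [h2, deriv_id'']

lemma TM.deriv2_zero (x : ℝ) : deriv (deriv (fun _ : ℝ => (0:ℝ))) x = 0 := by
  simp [deriv_const]

/-- Touching `u(x) = (x₊)²/2` from below on `(-1,1)` forces `φ''(x₀) ≤ 1`. -/
lemma TM.touch_below_u {φ : ℝ → ℝ} (hφ : ContDiff ℝ 2 φ) {x₀ : ℝ} (hx : x₀ ∈ Ioo (-1:ℝ) 1)
    (hle : ∀ x ∈ Ioo (-1:ℝ) 1, φ x ≤ (max x 0) ^ 2 / 2) (heq : φ x₀ = (max x₀ 0) ^ 2 / 2) :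
    deriv (deriv φ) x₀ ≤ 1 := by
  rcases lt_trichotomy x₀ 0 with h0 | h0 | h0
  · -- x₀ < 0 : compare with the zero function on Ioo (-1) 0
    have key := TM.touch_deriv2_le hφ contDiff_const isOpen_Ioo
      (show x₀ ∈ Ioo (-1:ℝ) 0 from ⟨hx.1, h0⟩)
      (fun x hxm => by
        have hm : max x 0 = 0 := max_eq_right hxm.2.le
        have := hle x ⟨hxm.1, by linarith [hxm.2]⟩
        rw [hm] at this
        simpa using this)
      (by
        have hm : max x₀ 0 = 0 := max_eq_right h0.le
        rw [hm] at heq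
        simpa using heq)
    calc deriv (deriv φ) x₀ ≤ deriv (deriv (fun _ : ℝ => (0:ℝ))) x₀ := key
      _ = 0 := TM.deriv2_zero x₀
      _ ≤ 1 := by norm_num
  · -- x₀ = 0 : compare with x²/2 on Ioo (-1) 1
    have key := TM.touch_deriv2_le hφ TM.contDiff_q isOpen_Ioo hx
      (fun x hxm => by
        have h1 : (max x 0) ^ 2 ≤ x ^ 2 := by
          rcases le_or_gt x 0 with h | h
          · rw [max_eq_right h]; nlinarith [sq_nonneg x]
          · rw [max_eq_left h.le]
        have := hle x hxm
        nlinarith)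
      (by
        subst h0
        simpa using heq)
    calc deriv (deriv φ) x₀ ≤ deriv (deriv (fun x : ℝ => x ^ 2 / 2)) x₀ := key
      _ = 1 := TM.deriv2_q x₀
  · -- x₀ > 0 : compare with x²/2 on Ioo 0 1
    have key := TM.touch_deriv2_le hφ TM.contDiff_q isOpen_Ioo
      (show x₀ ∈ Ioo (0:ℝ) 1 from ⟨h0, hx.2⟩)
      (fun x hxm => by
        have hm : max x 0 = x := max_eq_left hxm.1.le
        have := hle x ⟨by linarith [hxm.1], hxm.2⟩
        rw [hm] at this
        exact this)
      (by rw [heq, max_eq_left h0.le])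
    calc deriv (deriv φ) x₀ ≤ deriv (deriv (fun x : ℝ => x ^ 2 / 2)) x₀ := key
      _ = 1 := TM.deriv2_q x₀

/-- Touching `v(x) = -(x₊)²/2` from above on `(-1,1)` forces `-1 ≤ φ''(x₀)`. -/
lemma TM.touch_above_v {φ : ℝ → ℝ} (hφ : ContDiff ℝ 2 φ) {x₀ : ℝ} (hx : x₀ ∈ Ioo (-1:ℝ) 1)
    (hge : ∀ x ∈ Ioo (-1:ℝ) 1, -((max x 0) ^ 2 / 2) ≤ φ x)
    (heq : φ x₀ = -((max x₀ 0) ^ 2 / 2)) :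
    -1 ≤ deriv (deriv φ) x₀ := by
  rcases lt_trichotomy x₀ 0 with h0 | h0 | h0
  · have key := TM.touch_deriv2_le contDiff_const hφ isOpen_Ioo
      (show x₀ ∈ Ioo (-1:ℝ) 0 from ⟨hx.1, h0⟩)
      (fun x hxm => by
        have hm : max x 0 = 0 := max_eq_right hxm.2.le
        have := hge x ⟨hxm.1, by linarith [hxm.2]⟩
        rw [hm] at this
        simpa using this)
      (by
        have hm : max x₀ 0 = 0 := max_eq_right h0.le
        rw [hm] at heq
        simpa using heq.symm)
    have h1 : deriv (deriv (fun _ : ℝ => (0:ℝ))) x₀ = 0 := TM.deriv2_zero x₀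
    linarith [key, h1.symm.le.trans key]
  · have key := TM.touch_deriv2_le TM.contDiff_negq hφ isOpen_Ioo hx
      (fun x hxm => by
        have h1 : (max x 0) ^ 2 ≤ x ^ 2 := by
          rcases le_or_gt x 0 with h | h
          · rw [max_eq_right h]; nlinarith [sq_nonneg x]
          · rw [max_eq_left h.le]
        have := hge x hxm
        nlinarith)
      (by
        subst h0
        simpa using heq.symm)
    calc (-1:ℝ) = deriv (deriv (fun x : ℝ => -(x ^ 2 / 2))) x₀ := (TM.deriv2_negq x₀).symm
      _ ≤ deriv (deriv φ) x₀ := key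
  · have key := TM.touch_deriv2_le TM.contDiff_negq hφ isOpen_Ioo
      (show x₀ ∈ Ioo (0:ℝ) 1 from ⟨h0, hx.2⟩)
      (fun x hxm => by
        have hm : max x 0 = x := max_eq_left hxm.1.le
        have := hge x ⟨by linarith [hxm.1], hxm.2⟩
        rw [hm] at this
        exact this)
      (by rw [heq, max_eq_left h0.le])
    calc (-1:ℝ) = deriv (deriv (fun x : ℝ => -(x ^ 2 / 2))) x₀ := (TM.deriv2_negq x₀).symm
      _ ≤ deriv (deriv φ) x₀ := key

lemma TM.mplus_le {lam Lam s : ℝ} (hlam : 0 < lam) (hL : lam < Lam) (hs : s ≤ 1) :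
    MPlus1 lam Lam s ≤ Lam := by
  unfold MPlus1
  split_ifs with h
  · nlinarith
  · push_neg at h
    nlinarith

lemma TM.mplus_ge {lam Lam s : ℝ} (hlam : 0 < lam) (hL : lam < Lam) (hs : 1 ≤ s) :
    Lam ≤ MPlus1 lam Lam s := by
  unfold MPlus1
  rw [if_pos (by linarith : (0:ℝ) ≤ s)]
  nlinarith

lemma TM.mminus_ge {lam Lam s : ℝ} (hlam : 0 < lam) (hL : lam < Lam) (hs : -1 ≤ s) :
    -Lam ≤ MMinus1 lam Lam s := by
  unfold MMinus1
  split_ifs with h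
  · nlinarith
  · push_neg at h
    nlinarith

lemma TM.mminus_le {lam Lam s : ℝ} (hlam : 0 < lam) (hL : lam < Lam) (hs : s ≤ -1) :
    MMinus1 lam Lam s ≤ -Lam := by
  unfold MMinus1
  rw [if_neg (by push_neg; linarith : ¬ (0:ℝ) ≤ s)]
  nlinarith

/-- **Optimality example.** In dimension one, `u(x) = (x₊)²/2` and `v(x) = −(x₊)²/2` solve the
two membranes problem on `(−1, 1)` with `F = M⁺`, `G = M⁻`, `f ≡ Λ`, `g ≡ −Λ` in the viscosity
sense: `u ≥ v`; `M⁺(u'') ≤ Λ` and `M⁻(v'') ≥ −Λ` in `(−1, 1)`; and `M⁺(u'') = Λ`,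
`M⁻(v'') = −Λ` in `Ω = {u > v} = (0, 1)`. -/
theorem one_dim_two_membranes_example
    (lam Lam : ℝ) (hlam : 0 < lam) (hLam : lam < Lam) :
    let u : ℝ → ℝ := fun x => (max x 0) ^ 2 / 2
    let v : ℝ → ℝ := fun x => -((max x 0) ^ 2 / 2)
    (∀ x ∈ Icc (-1 : ℝ) 1, v x ≤ u x) ∧
    ViscLE1 (MPlus1 lam Lam) u (fun _ => Lam) (Ioo (-1) 1) ∧
    ViscGE1 (MMinus1 lam Lam) v (fun _ => -Lam) (Ioo (-1) 1) ∧
    {x | x ∈ Ioo (-1 : ℝ) 1 ∧ v x < u x} = Ioo (0 : ℝ) 1 ∧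
    (ViscLE1 (MPlus1 lam Lam) u (fun _ => Lam) (Ioo 0 1) ∧
      ViscGE1 (MPlus1 lam Lam) u (fun _ => Lam) (Ioo 0 1)) ∧
    (ViscLE1 (MMinus1 lam Lam) v (fun _ => -Lam) (Ioo 0 1) ∧
      ViscGE1 (MMinus1 lam Lam) v (fun _ => -Lam) (Ioo 0 1)) := by
  intro u v
  have hu_q : ∀ x ∈ Ioo (0:ℝ) 1, u x = x ^ 2 / 2 := fun x hx => by
    simp only [u, max_eq_left hx.1.le]
  have hv_q : ∀ x ∈ Ioo (0:ℝ) 1, v x = -(x ^ 2 / 2) := fun x hx => by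
    simp only [v, max_eq_left hx.1.le]
  refine ⟨?_, ?_, ?_, ?_, ⟨?_, ?_⟩, ?_, ?_⟩
  · -- v ≤ u
    intro x _
    simp only [u, v]
    nlinarith [sq_nonneg (max x 0)]
  · -- ViscLE1 M⁺ u Λ on (-1,1)
    intro φ hφ x₀ hx₀ hle heq
    exact TM.mplus_le hlam hLam (TM.touch_below_u hφ hx₀ hle heq)
  · -- ViscGE1 M⁻ v (-Λ) on (-1,1)
    intro φ hφ x₀ hx₀ hge heq
    exact TM.mminus_ge hlam hLam (TM.touch_above_v hφ hx₀ hge heq)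
  · -- set equality
    ext x
    simp only [mem_setOf_eq, mem_Ioo, u, v]
    constructor
    · rintro ⟨⟨h1, h2⟩, hlt⟩
      refine ⟨?_, h2⟩
      by_contra hx
      push_neg at hx
      rw [max_eq_right hx] at hlt
      norm_num at hlt
    · rintro ⟨h0, h1⟩
      refine ⟨⟨by linarith, h1⟩, ?_⟩
      rw [max_eq_left h0.le]
      nlinarith
  · -- ViscLE1 M⁺ u Λ on (0,1)
    intro φ hφ x₀ hx₀ hle heq
    have key := TM.touch_deriv2_le hφ TM.contDiff_q isOpen_Ioo hx₀
      (fun x hx => (hle x hx).trans_eq (hu_q x hx)) (heq.trans (hu_q x₀ hx₀))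
    rw [TM.deriv2_q x₀] at key
    exact TM.mplus_le hlam hLam key
  · -- ViscGE1 M⁺ u Λ on (0,1)
    intro φ hφ x₀ hx₀ hge heq
    have key := TM.touch_deriv2_le TM.contDiff_q hφ isOpen_Ioo hx₀
      (fun x hx => (hu_q x hx).symm.trans_le (hge x hx))
      ((hu_q x₀ hx₀).symm.trans heq.symm)
    rw [TM.deriv2_q x₀] at key
    exact TM.mplus_ge hlam hLam key
  · -- ViscLE1 M⁻ v (-Λ) on (0,1)
    intro φ hφ x₀ hx₀ hle heq
    have key := TM.touch_deriv2_le hφ TM.contDiff_negq isOpen_Ioo hx₀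
      (fun x hx => (hle x hx).trans_eq (hv_q x hx)) (heq.trans (hv_q x₀ hx₀))
    rw [TM.deriv2_negq x₀] at key
    exact TM.mminus_le hlam hLam key
  · -- ViscGE1 M⁻ v (-Λ) on (0,1)
    intro φ hφ x₀ hx₀ hge heq
    have key := TM.touch_deriv2_le TM.contDiff_negq hφ isOpen_Ioo hx₀
      (fun x hx => (hv_q x hx).symm.trans_le (hge x hx))
      ((hv_q x₀ hx₀).symm.trans heq.symm)
    rw [TM.deriv2_negq x₀] at key
    exact TM.mminus_ge hlam hLam key
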